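/- Let L ≥ 1, let q_1,…,q_M ∈ Δ^L, let U := conv{q_1,…,q_M}, and let ρ(Z) = max_{q ∈ U} Σ_{j=1}^L q(j) Z(j). Let A_1,…,A_L ∈ ℝ^{n×n}, B_1,…,B_L ∈ ℝ^{n×m}, let Q ∈ ℝ^{n×n}, R ∈ ℝ^{m×m}, P ∈ ℝ^{n×n} be symmetric positive definite, and suppose there exists F ∈ ℝ^{m×n} such that for every l ∈ {1,…,M} the matrix Σ_{j=1}^L q_l(j)(A_j + B_j F)ᵀ P (A_j + B_j F) − P + FᵀRF + Q is negative semidefinite. Define V_0(x) := xᵀPx and V_{h+1}(x) := inf_{u ∈ ℝ^m} [xᵀQx + uᵀRu + ρ(j ↦ V_h(A_j x + B_j u))]. Then for every h ∈ ℕ and every x ∈ ℝ^n, V_{h+1}(x) ≤ V_h(x). -/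

import Mathlib

open Matrix

private lemma aux_dot_sum_smul_mulVec (L n : ℕ) (c : Fin L → ℝ)
    (N : Fin L → Matrix (Fin n) (Fin n) ℝ) (x : Fin n → ℝ) :
    x ⬝ᵥ ((∑ j, c j • N j) *ᵥ x) = ∑ j, c j * (x ⬝ᵥ (N j *ᵥ x)) := by
  have h1 : (∑ j, c j • N j) *ᵥ x = ∑ j, c j • (N j *ᵥ x) := by
    ext i
    simp only [Matrix.mulVec, dotProduct, Matrix.sum_apply, Matrix.smul_apply,
      Finset.sum_apply, Pi.smul_apply, smul_eq_mul, Finset.sum_mul, Finset.mul_sum]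
    rw [Finset.sum_comm]
    exact Finset.sum_congr rfl fun j _ => Finset.sum_congr rfl fun k _ => by ring
  rw [h1]
  simp only [dotProduct, Finset.sum_apply, Pi.smul_apply, smul_eq_mul,
    Finset.mul_sum]
  rw [Finset.sum_comm]
  exact Finset.sum_congr rfl fun j _ => Finset.sum_congr rfl fun i _ => by ring

/-- Monotone decrease of the dynamic-programming value functions of the
risk-averse optimal control problem under the terminal-cost LMI condition. -/
theorem stmt_10 (L n m M : ℕ) (hL : 1 ≤ L) (hM : 1 ≤ M)
    (q : Fin M → Fin L → ℝ) (hq : ∀ l, q l ∈ stdSimplex ℝ (Fin L))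
    (ρ : (Fin L → ℝ) → ℝ)
    (hρ : ∀ Z : Fin L → ℝ,
      IsGreatest ((fun qq => ∑ j, qq j * Z j) '' (convexHull ℝ (Set.range q))) (ρ Z))
    (A : Fin L → Matrix (Fin n) (Fin n) ℝ) (B : Fin L → Matrix (Fin n) (Fin m) ℝ)
    (Q P : Matrix (Fin n) (Fin n) ℝ) (R : Matrix (Fin m) (Fin m) ℝ)
    (hQ : Q.PosDef) (hP : P.PosDef) (hR : R.PosDef)
    (F : Matrix (Fin m) (Fin n) ℝ)
    (hlmi : ∀ l : Fin M,
      (-((∑ j, q l j • ((A j + B j * F)ᵀ * P * (A j + B j * F))) - P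
          + Fᵀ * R * F + Q)).PosSemidef)
    (V : ℕ → (Fin n → ℝ) → ℝ)
    (hV0 : ∀ x, V 0 x = x ⬝ᵥ (P *ᵥ x))
    (hVs : ∀ (h : ℕ) (x : Fin n → ℝ), V (h + 1) x =
      ⨅ u : Fin m → ℝ, (x ⬝ᵥ (Q *ᵥ x) + u ⬝ᵥ (R *ᵥ u)
        + ρ (fun j => V h (A j *ᵥ x + B j *ᵥ u)))) :
    ∀ (h : ℕ) (x : Fin n → ℝ), V (h + 1) x ≤ V h x := by
  -- hull is contained in the simplex
  have hhull : convexHull ℝ (Set.range q) ⊆ stdSimplex ℝ (Fin L) :=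
    convexHull_min (Set.range_subset_iff.2 hq) (convex_stdSimplex ℝ _)
  -- monotonicity of ρ
  have hρ_mono : ∀ Z Z' : Fin L → ℝ, (∀ j, Z j ≤ Z' j) → ρ Z ≤ ρ Z' := by
    intro Z Z' hZZ
    obtain ⟨⟨qq, hqq, hq2⟩, _⟩ := hρ Z
    have hqq' := hhull hqq
    calc ρ Z = ∑ j, qq j * Z j := hq2.symm
      _ ≤ ∑ j, qq j * Z' j :=
        Finset.sum_le_sum fun j _ => mul_le_mul_of_nonneg_left (hZZ j) (hqq'.1 j)
      _ ≤ ρ Z' := (hρ Z').2 ⟨qq, hqq, rfl⟩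
  -- nonnegativity of ρ on nonnegative inputs
  have hρ_nonneg : ∀ Z : Fin L → ℝ, (∀ j, 0 ≤ Z j) → 0 ≤ ρ Z := by
    intro Z hZ
    obtain ⟨⟨qq, hqq, hq2⟩, _⟩ := hρ Z
    rw [← hq2]
    exact Finset.sum_nonneg fun j _ => mul_nonneg ((hhull hqq).1 j) (hZ j)
  have hQx : ∀ x : Fin n → ℝ, 0 ≤ x ⬝ᵥ (Q *ᵥ x) := by
    intro x; have := hQ.posSemidef.dotProduct_mulVec_nonneg x; simpa using this
  have hPx : ∀ x : Fin n → ℝ, 0 ≤ x ⬝ᵥ (P *ᵥ x) := by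
    intro x; have := hP.posSemidef.dotProduct_mulVec_nonneg x; simpa using this
  have hRx : ∀ u : Fin m → ℝ, 0 ≤ u ⬝ᵥ (R *ᵥ u) := by
    intro u; have := hR.posSemidef.dotProduct_mulVec_nonneg u; simpa using this
  -- nonnegativity of V
  have hVnn : ∀ h x, 0 ≤ V h x := by
    intro h
    induction h with
    | zero => intro x; rw [hV0]; exact hPx x
    | succ h ih =>
      intro x; rw [hVs]
      exact le_ciInf fun u => add_nonneg (add_nonneg (hQx x) (hRx u))
        (hρ_nonneg _ fun j => ih _)
  -- the inf families are bounded below by 0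
  have hbdd : ∀ (h : ℕ) (x : Fin n → ℝ),
      BddBelow (Set.range fun u : Fin m → ℝ =>
        x ⬝ᵥ (Q *ᵥ x) + u ⬝ᵥ (R *ᵥ u)
          + ρ (fun j => V h (A j *ᵥ x + B j *ᵥ u))) := by
    intro h x
    refine ⟨0, Set.forall_mem_range.2 fun u => ?_⟩
    exact add_nonneg (add_nonneg (hQx x) (hRx u)) (hρ_nonneg _ fun j => hVnn h _)
  -- quadratic form identity
  have hquad : ∀ (G : Matrix (Fin n) (Fin n) ℝ) (x : Fin n → ℝ),
      x ⬝ᵥ ((Gᵀ * P * G) *ᵥ x) = (G *ᵥ x) ⬝ᵥ (P *ᵥ (G *ᵥ x)) := by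
    intro G x
    rw [← Matrix.mulVec_mulVec, ← Matrix.mulVec_mulVec, Matrix.dotProduct_mulVec,
      Matrix.vecMul_transpose]
  have hRquad : ∀ x : Fin n → ℝ,
      x ⬝ᵥ ((Fᵀ * R * F) *ᵥ x) = (F *ᵥ x) ⬝ᵥ (R *ᵥ (F *ᵥ x)) := by
    intro x
    rw [← Matrix.mulVec_mulVec, ← Matrix.mulVec_mulVec, Matrix.dotProduct_mulVec,
      Matrix.vecMul_transpose]
  -- key inequality from the LMI, extended to the hull
  have hkey : ∀ (x : Fin n → ℝ) (qq : Fin L → ℝ),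
      qq ∈ convexHull ℝ (Set.range q) →
      ∑ j, qq j * (x ⬝ᵥ (((A j + B j * F)ᵀ * P * (A j + B j * F)) *ᵥ x))
        ≤ x ⬝ᵥ (P *ᵥ x) - x ⬝ᵥ ((Fᵀ * R * F) *ᵥ x) - x ⬝ᵥ (Q *ᵥ x) := by
    intro x
    set z : Fin L → ℝ := fun j =>
      x ⬝ᵥ (((A j + B j * F)ᵀ * P * (A j + B j * F)) *ᵥ x) with hz
    set c : ℝ := x ⬝ᵥ (P *ᵥ x) - x ⬝ᵥ ((Fᵀ * R * F) *ᵥ x) - x ⬝ᵥ (Q *ᵥ x) with hc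
    have hS : convexHull ℝ (Set.range q) ⊆ {p : Fin L → ℝ | ∑ j, p j * z j ≤ c} := by
      apply convexHull_min
      · rintro _ ⟨l, rfl⟩
        have h0 := (hlmi l).dotProduct_mulVec_nonneg x
        simp only [star_trivial] at h0
        have h1 : x ⬝ᵥ ((∑ j, q l j • ((A j + B j * F)ᵀ * P * (A j + B j * F))) *ᵥ x)
            + x ⬝ᵥ ((Fᵀ * R * F) *ᵥ x) + x ⬝ᵥ (Q *ᵥ x) ≤ x ⬝ᵥ (P *ᵥ x) := by
          have h2 : (0:ℝ) ≤ x ⬝ᵥ ((-((∑ j, q l j • ((A j + B j * F)ᵀ * P * (A j + B j * F))) - P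
              + Fᵀ * R * F + Q)) *ᵥ x) := h0
          simp only [Matrix.neg_mulVec, Matrix.add_mulVec, Matrix.sub_mulVec,
            dotProduct_neg, dotProduct_add, dotProduct_sub] at h2
          linarith
        have h3 : x ⬝ᵥ ((∑ j, q l j • ((A j + B j * F)ᵀ * P * (A j + B j * F))) *ᵥ x)
            = ∑ j, q l j * z j := aux_dot_sum_smul_mulVec L n _ _ x
        rw [Set.mem_setOf_eq, ← h3]
        linarith
      · intro p1 hp1 p2 hp2 a b ha hb hab
        simp only [Set.mem_setOf_eq] at hp1 hp2 ⊢
        have : ∑ j, (a • p1 + b • p2) j * z j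
            = a * ∑ j, p1 j * z j + b * ∑ j, p2 j * z j := by
          rw [Finset.mul_sum, Finset.mul_sum, ← Finset.sum_add_distrib]
          refine Finset.sum_congr rfl fun j _ => ?_
          simp [Pi.add_apply, Pi.smul_apply, smul_eq_mul]; ring
        rw [this]
        have h4 : a * c + b * c = c := by rw [← add_mul, hab, one_mul]
        have h5 := mul_le_mul_of_nonneg_left hp1 ha
        have h6 := mul_le_mul_of_nonneg_left hp2 hb
        linarith
    intro qq hqq
    exact hS hqq
  -- base case: V 1 ≤ V 0
  have hbase : ∀ x : Fin n → ℝ, V 1 x ≤ V 0 x := by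
    intro x
    rw [hVs, hV0]
    have h1 : (x ⬝ᵥ (Q *ᵥ x) + (F *ᵥ x) ⬝ᵥ (R *ᵥ (F *ᵥ x))
        + ρ (fun j => V 0 (A j *ᵥ x + B j *ᵥ (F *ᵥ x)))) ≤ x ⬝ᵥ (P *ᵥ x) := by
      have hZ : ∀ j : Fin L, V 0 (A j *ᵥ x + B j *ᵥ (F *ᵥ x))
          = x ⬝ᵥ (((A j + B j * F)ᵀ * P * (A j + B j * F)) *ᵥ x) := by
        intro j
        rw [hV0, hquad]
        congr 1 <;> rw [Matrix.add_mulVec, Matrix.mulVec_mulVec]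
      have hρle : ρ (fun j => V 0 (A j *ᵥ x + B j *ᵥ (F *ᵥ x)))
          ≤ x ⬝ᵥ (P *ᵥ x) - x ⬝ᵥ ((Fᵀ * R * F) *ᵥ x) - x ⬝ᵥ (Q *ᵥ x) := by
        obtain ⟨⟨qq, hqq, hq2⟩, _⟩ := hρ (fun j => V 0 (A j *ᵥ x + B j *ᵥ (F *ᵥ x)))
        rw [← hq2]
        calc ∑ j, qq j * V 0 (A j *ᵥ x + B j *ᵥ (F *ᵥ x))
            = ∑ j, qq j * (x ⬝ᵥ (((A j + B j * F)ᵀ * P * (A j + B j * F)) *ᵥ x)) := by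
              refine Finset.sum_congr rfl fun j _ => ?_; rw [hZ j]
          _ ≤ _ := hkey x qq hqq
      have hRF := hRquad x
      linarith
    exact le_trans (ciInf_le (hbdd 0 x) (F *ᵥ x)) h1
  -- induction
  intro h
  induction h with
  | zero => exact hbase
  | succ h ih =>
    intro x
    rw [hVs, hVs]
    refine ciInf_mono (hbdd (h + 1) x) fun u => ?_
    have : ρ (fun j => V (h + 1) (A j *ᵥ x + B j *ᵥ u))
        ≤ ρ (fun j => V h (A j *ᵥ x + B j *ᵥ u)) :=
      hρ_mono _ _ fun j => ih _
    linarith
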